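/- arXiv:1803.05694 — 2 statements merged into one kernel-verified Lean document; each statement's English description precedes it below -/
import Mathlib

section
/- Let 0 < s < 1, N > 2s, and let u ∈ L²(ℝ^N) ∩ L^{2*}(ℝ^N) with 2* = 2N/(N-2s). Let φ : ℝ^N → ℝ be Lipschitz with Lipschitz constant L and bounded by 1, with φ ≡ constant outside the ball B(x₀, 2ρ). Then for any K > 4, ∬_{ℝ^{2N}} |φ(x)-φ(y)|² |u(x)|² / |x-y|^{N+2s} dx dy ≤ C ρ^{-2s} ∫_{B(x₀, Kρ)} |u(x)|² dx + C K^{-N} ‖u‖²_{L^{2*}}, where C depends only on N, s, L ρ. -/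
open MeasureTheory
open Metric ENNReal

lemma annulus_rpow_bound {c d t : ℝ} (hc : 0 < c) (h1 : c/2 ≤ d) (h2 : d ≤ c) :
    d ^ t ≤ 2 ^ |t| * c ^ t := by
  have hd : 0 < d := lt_of_lt_of_le (by linarith) h1
  rcases le_or_gt 0 t with h | h
  · have : d ^ t ≤ c ^ t := Real.rpow_le_rpow hd.le h2 h
    have h2t : (1:ℝ) ≤ 2 ^ |t| := Real.one_le_rpow one_le_two (abs_nonneg t)
    nlinarith [Real.rpow_nonneg hc.le t, Real.rpow_nonneg hd.le t]
  · have h1' : d ^ t ≤ (c/2) ^ t :=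
      Real.rpow_le_rpow_of_nonpos (by linarith) h1 h.le
    have : (c/2) ^ t = 2 ^ |t| * c ^ t := by
      rw [abs_of_neg h, div_eq_mul_inv, Real.mul_rpow hc.le (by norm_num),
        Real.rpow_neg (by norm_num), Real.inv_rpow (by norm_num)]
      ring
    linarith

lemma term_eval {r q t : ℝ} (N : ℕ) (hr : 0 < r) (hq : 0 < q) (j : ℕ) :
    (r * q ^ j) ^ t * (r * q ^ j) ^ (N:ℝ)
      = r ^ ((N:ℝ) + t) * (q ^ ((N:ℝ) + t)) ^ j := by
  have hc : (0:ℝ) < r * q ^ j := by positivity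
  rw [← Real.rpow_add hc, ← Real.rpow_natCast (q ^ ((N:ℝ)+t)) j,
    ← Real.rpow_mul hq.le, Real.mul_rpow hr.le (by positivity),
    ← Real.rpow_natCast q j, ← Real.rpow_mul hq.le, add_comm t,
    mul_comm ((N:ℝ) + t) (j:ℝ)]

theorem radial_ball {N : ℕ} (hN : 1 ≤ N) (t : ℝ) (ht : -(N:ℝ) < t)
    (x₀ : EuclideanSpace ℝ (Fin N)) (r : ℝ) (hr : 0 < r) :
    ∫⁻ y in ball x₀ r, ENNReal.ofReal (dist y x₀ ^ t)
      ≤ (ENNReal.ofReal ((2:ℝ) ^ |t|) * volume (ball (0 : EuclideanSpace ℝ (Fin N)) 1)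
          * (1 - ENNReal.ofReal ((2⁻¹:ℝ) ^ ((N:ℝ) + t)))⁻¹) * ENNReal.ofReal (r ^ ((N:ℝ) + t)) := by
  classical
  haveI : Nontrivial (EuclideanSpace ℝ (Fin N)) := by
    apply Module.nontrivial_of_finrank_pos (R := ℝ)
    rw [finrank_euclideanSpace_fin]; omega
  set V := volume (ball (0 : EuclideanSpace ℝ (Fin N)) 1) with hV
  set c : ℕ → ℝ := fun j => r * (2⁻¹:ℝ) ^ j with hc
  have hcpos : ∀ j, 0 < c j := fun j => by positivity
  have hchalf : ∀ j, c (j+1) = c j / 2 := by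
    intro j; simp only [hc, pow_succ]; ring
  set A : ℕ → Set (EuclideanSpace ℝ (Fin N)) :=
    fun j => ball x₀ (c j) \ ball x₀ (c (j+1)) with hA
  have h0 : volume (ball x₀ r ∩ {x₀}) = 0 :=
    measure_mono_null Set.inter_subset_right (measure_singleton x₀)
  have hres : ∫⁻ y in ball x₀ r, ENNReal.ofReal (dist y x₀ ^ t)
      = ∫⁻ y in ball x₀ r \ {x₀}, ENNReal.ofReal (dist y x₀ ^ t) := by
    rw [Measure.restrict_congr_set (diff_ae_eq_self.2 h0)]
  have hcover : ball x₀ r \ {x₀} ⊆ ⋃ j, A j := by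
    intro y hy
    have hd0 : 0 < dist y x₀ := by
      rw [dist_pos]; exact fun h => hy.2 (by simp [h])
    have hdr : dist y x₀ < r := mem_ball.1 hy.1
    have hex : ∃ n : ℕ, r * (2⁻¹:ℝ) ^ n ≤ dist y x₀ := by
      obtain ⟨n, hn⟩ := exists_pow_lt_of_lt_one (x := dist y x₀ / r) (by positivity)
        (by norm_num : (2⁻¹:ℝ) < 1)
      exact ⟨n, by rw [mul_comm]; exact (le_div_iff₀ hr).1 hn.le⟩
    set j₀ := Nat.find hex with hj₀
    have hfind : c j₀ ≤ dist y x₀ := Nat.find_spec hex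
    have hj₀pos : 0 < j₀ := by
      rcases Nat.eq_zero_or_pos j₀ with h | h
      · exfalso; rw [h] at hfind; simp [hc] at hfind; linarith
      · exact h
    refine Set.mem_iUnion.2 ⟨j₀ - 1, ?_, ?_⟩
    · refine mem_ball.2 (lt_of_not_ge fun hcon => ?_)
      exact Nat.find_min hex (Nat.sub_lt hj₀pos one_pos) hcon
    · rw [Nat.sub_add_cancel hj₀pos]
      simpa [mem_ball, not_lt] using hfind
  set w : ℝ := (2⁻¹:ℝ) ^ ((N:ℝ) + t) with hw
  have hw0 : 0 ≤ w := Real.rpow_nonneg (by norm_num) _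
  have hterm : ∀ j, ∫⁻ y in A j, ENNReal.ofReal (dist y x₀ ^ t)
      ≤ (ENNReal.ofReal ((2:ℝ) ^ |t|) * ENNReal.ofReal (r ^ ((N:ℝ) + t)) * V)
          * (ENNReal.ofReal w) ^ j := by
    intro j
    have hpt : ∀ y ∈ A j, ENNReal.ofReal (dist y x₀ ^ t)
        ≤ ENNReal.ofReal ((2:ℝ) ^ |t| * c j ^ t) := by
      intro y hy
      refine ENNReal.ofReal_le_ofReal (annulus_rpow_bound (hcpos j) ?_ (mem_ball.1 hy.1).le)
      rw [← hchalf j]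
      exact not_lt.1 fun hcon => hy.2 (mem_ball.2 hcon)
    calc ∫⁻ y in A j, ENNReal.ofReal (dist y x₀ ^ t)
        ≤ ∫⁻ _ in A j, ENNReal.ofReal ((2:ℝ) ^ |t| * c j ^ t) :=
          setLIntegral_mono measurable_const hpt
      _ = ENNReal.ofReal ((2:ℝ) ^ |t| * c j ^ t) * volume (A j) := setLIntegral_const _ _
      _ ≤ ENNReal.ofReal ((2:ℝ) ^ |t| * c j ^ t) * volume (ball x₀ (c j)) :=
          mul_le_mul_right (measure_mono Set.diff_subset) _
      _ = (ENNReal.ofReal ((2:ℝ) ^ |t|) * ENNReal.ofReal (r ^ ((N:ℝ) + t)) * V)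
            * (ENNReal.ofReal w) ^ j := by
          rw [Measure.addHaar_ball volume x₀ (hcpos j).le]
          rw [ENNReal.ofReal_mul (by positivity), ← hV]
          have h1 : (c j : ℝ) ^ (Module.finrank ℝ (EuclideanSpace ℝ (Fin N))) = c j ^ ((N:ℝ)) := by
            rw [finrank_euclideanSpace_fin, ← Real.rpow_natCast]
          rw [h1, ← mul_assoc, mul_assoc (ENNReal.ofReal _), ← ENNReal.ofReal_mul (by positivity)]
          have h2 : (c j : ℝ) ^ t * c j ^ ((N:ℝ)) = r ^ ((N:ℝ) + t) * w ^ j :=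
            term_eval N hr (by norm_num) j
          rw [h2, ENNReal.ofReal_mul (by positivity), ENNReal.ofReal_pow hw0]
          ring
  calc ∫⁻ y in ball x₀ r, ENNReal.ofReal (dist y x₀ ^ t)
      = ∫⁻ y in ball x₀ r \ {x₀}, ENNReal.ofReal (dist y x₀ ^ t) := hres
    _ ≤ ∫⁻ y in ⋃ j, A j, ENNReal.ofReal (dist y x₀ ^ t) := lintegral_mono_set hcover
    _ ≤ ∑' j, ∫⁻ y in A j, ENNReal.ofReal (dist y x₀ ^ t) := lintegral_iUnion_le _ _
    _ ≤ ∑' j, (ENNReal.ofReal ((2:ℝ) ^ |t|) * ENNReal.ofReal (r ^ ((N:ℝ) + t)) * V)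
          * (ENNReal.ofReal w) ^ j := ENNReal.tsum_le_tsum hterm
    _ = (ENNReal.ofReal ((2:ℝ) ^ |t|) * ENNReal.ofReal (r ^ ((N:ℝ) + t)) * V)
          * (1 - ENNReal.ofReal w)⁻¹ := by
        rw [ENNReal.tsum_mul_left, ENNReal.tsum_geometric]
    _ = (ENNReal.ofReal ((2:ℝ) ^ |t|) * V * (1 - ENNReal.ofReal w)⁻¹)
          * ENNReal.ofReal (r ^ ((N:ℝ) + t)) := by ring

theorem radial_compl {N : ℕ} (hN : 1 ≤ N) (t : ℝ) (ht : t ≤ 0)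
    (x₀ : EuclideanSpace ℝ (Fin N)) (r : ℝ) (hr : 0 < r) :
    ∫⁻ y in (ball x₀ r)ᶜ, ENNReal.ofReal (dist y x₀ ^ t)
      ≤ (ENNReal.ofReal ((2:ℝ) ^ (N:ℕ)) * volume (ball (0 : EuclideanSpace ℝ (Fin N)) 1)
          * (1 - ENNReal.ofReal ((2:ℝ) ^ ((N:ℝ) + t)))⁻¹) * ENNReal.ofReal (r ^ ((N:ℝ) + t)) := by
  classical
  haveI : Nontrivial (EuclideanSpace ℝ (Fin N)) := by
    apply Module.nontrivial_of_finrank_pos (R := ℝ)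
    rw [finrank_euclideanSpace_fin]; omega
  set V := volume (ball (0 : EuclideanSpace ℝ (Fin N)) 1) with hV
  set c : ℕ → ℝ := fun j => r * (2:ℝ) ^ j with hc
  have hcpos : ∀ j, 0 < c j := fun j => by positivity
  set A : ℕ → Set (EuclideanSpace ℝ (Fin N)) :=
    fun j => ball x₀ (c (j+1)) \ ball x₀ (c j) with hA
  have hcover : (ball x₀ r)ᶜ ⊆ ⋃ j, A j := by
    intro y hy
    have hdr : r ≤ dist y x₀ := by
      simpa [mem_ball, not_lt] using hy
    have hex : ∃ n : ℕ, dist y x₀ < r * (2:ℝ) ^ n := by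
      obtain ⟨n, hn⟩ := pow_unbounded_of_one_lt (dist y x₀ / r) (one_lt_two (α := ℝ))
      exact ⟨n, by rw [mul_comm]; exact (div_lt_iff₀ hr).1 hn⟩
    set j₀ := Nat.find hex with hj₀
    have hfind : dist y x₀ < c j₀ := Nat.find_spec hex
    have hj₀pos : 0 < j₀ := by
      rcases Nat.eq_zero_or_pos j₀ with h | h
      · exfalso; rw [h] at hfind; simp [hc] at hfind; linarith
      · exact h
    refine Set.mem_iUnion.2 ⟨j₀ - 1, ?_, ?_⟩
    · rw [Nat.sub_add_cancel hj₀pos]; exact mem_ball.2 hfind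
    · intro hcon
      exact Nat.find_min hex (Nat.sub_lt hj₀pos one_pos) (mem_ball.1 hcon)
  set w : ℝ := (2:ℝ) ^ ((N:ℝ) + t) with hw
  have hw0 : 0 ≤ w := Real.rpow_nonneg (by norm_num) _
  have hterm : ∀ j, ∫⁻ y in A j, ENNReal.ofReal (dist y x₀ ^ t)
      ≤ (ENNReal.ofReal ((2:ℝ) ^ (N:ℕ)) * ENNReal.ofReal (r ^ ((N:ℝ) + t)) * V)
          * (ENNReal.ofReal w) ^ j := by
    intro j
    have hpt : ∀ y ∈ A j, ENNReal.ofReal (dist y x₀ ^ t)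
        ≤ ENNReal.ofReal (c j ^ t) := by
      intro y hy
      refine ENNReal.ofReal_le_ofReal
        (Real.rpow_le_rpow_of_nonpos (hcpos j) ?_ ht)
      exact not_lt.1 fun hcon => hy.2 (mem_ball.2 hcon)
    calc ∫⁻ y in A j, ENNReal.ofReal (dist y x₀ ^ t)
        ≤ ∫⁻ _ in A j, ENNReal.ofReal (c j ^ t) :=
          setLIntegral_mono measurable_const hpt
      _ = ENNReal.ofReal (c j ^ t) * volume (A j) := setLIntegral_const _ _
      _ ≤ ENNReal.ofReal (c j ^ t) * volume (ball x₀ (c (j+1))) :=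
          mul_le_mul_right (measure_mono Set.diff_subset) _
      _ = (ENNReal.ofReal ((2:ℝ) ^ (N:ℕ)) * ENNReal.ofReal (r ^ ((N:ℝ) + t)) * V)
            * (ENNReal.ofReal w) ^ j := by
          rw [Measure.addHaar_ball volume x₀ (hcpos (j+1)).le]
          rw [← hV]
          have h1 : (c (j+1) : ℝ) ^ (Module.finrank ℝ (EuclideanSpace ℝ (Fin N)))
              = (2:ℝ) ^ (N:ℕ) * c j ^ ((N:ℝ)) := by
            rw [finrank_euclideanSpace_fin, ← Real.rpow_natCast (c (j+1)) N]
            have h2c : c (j+1) = 2 * c j := by simp only [hc, pow_succ]; ring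
            rw [h2c, Real.mul_rpow (by norm_num) (hcpos j).le, Real.rpow_natCast 2 N]
          rw [h1, ENNReal.ofReal_mul (by positivity), ← mul_assoc,
            mul_comm (ENNReal.ofReal (c j ^ t)), mul_assoc (ENNReal.ofReal ((2:ℝ)^(N:ℕ))),
            ← ENNReal.ofReal_mul (by positivity)]
          have h2 : (c j : ℝ) ^ ((N:ℝ)) * c j ^ t = r ^ ((N:ℝ) + t) * w ^ j := by
            rw [mul_comm]; exact term_eval N hr (by norm_num) j
          rw [h2, ENNReal.ofReal_mul (by positivity), ENNReal.ofReal_pow hw0]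
          ring
  calc ∫⁻ y in (ball x₀ r)ᶜ, ENNReal.ofReal (dist y x₀ ^ t)
      ≤ ∫⁻ y in ⋃ j, A j, ENNReal.ofReal (dist y x₀ ^ t) := lintegral_mono_set hcover
    _ ≤ ∑' j, ∫⁻ y in A j, ENNReal.ofReal (dist y x₀ ^ t) := lintegral_iUnion_le _ _
    _ ≤ ∑' j, (ENNReal.ofReal ((2:ℝ) ^ (N:ℕ)) * ENNReal.ofReal (r ^ ((N:ℝ) + t)) * V)
          * (ENNReal.ofReal w) ^ j := ENNReal.tsum_le_tsum hterm
    _ = (ENNReal.ofReal ((2:ℝ) ^ (N:ℕ)) * ENNReal.ofReal (r ^ ((N:ℝ) + t)) * V)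
          * (1 - ENNReal.ofReal w)⁻¹ := by
        rw [ENNReal.tsum_mul_left, ENNReal.tsum_geometric]
    _ = (ENNReal.ofReal ((2:ℝ) ^ (N:ℕ)) * V * (1 - ENNReal.ofReal w)⁻¹)
          * ENNReal.ofReal (r ^ ((N:ℝ) + t)) := by ring

lemma g_bound {N : ℕ} (hN : 1 ≤ N) {s : ℝ} (hs0 : 0 < s) (hs1 : s < 1)
    (hNs : 2 * s < (N : ℝ)) {L ρ : ℝ} (hL : 0 ≤ L) (hρ : 0 < ρ) :
    ∃ D : ℝ≥0∞, D ≠ ∞ ∧ ∀ (φ : EuclideanSpace ℝ (Fin N) → ℂ),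
      LipschitzWith (Real.toNNReal L) φ → (∀ z, ‖φ z‖ ≤ 1) →
      ∀ x, (∫⁻ y, ENNReal.ofReal
            (‖φ x - φ y‖ ^ 2 / ‖x - y‖ ^ ((N : ℝ) + 2 * s)))
        ≤ D * ENNReal.ofReal (ρ ^ (-(2 * s))) := by
  classical
  set t₁ : ℝ := 2 - ((N:ℝ) + 2*s) with ht₁
  set t₂ : ℝ := -((N:ℝ) + 2*s) with ht₂
  set V := volume (ball (0 : EuclideanSpace ℝ (Fin N)) 1) with hV
  have hVfin : V ≠ ∞ := measure_ball_lt_top.ne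
  set Cb : ℝ≥0∞ := ENNReal.ofReal ((2:ℝ) ^ |t₁|) * V
      * (1 - ENNReal.ofReal ((2⁻¹:ℝ) ^ ((N:ℝ) + t₁)))⁻¹ with hCb
  set Ct : ℝ≥0∞ := ENNReal.ofReal ((2:ℝ) ^ (N:ℕ)) * V
      * (1 - ENNReal.ofReal ((2:ℝ) ^ ((N:ℝ) + t₂)))⁻¹ with hCt
  have hCbfin : Cb ≠ ∞ := by
    have h1 : ENNReal.ofReal ((2⁻¹:ℝ) ^ ((N:ℝ) + t₁)) < 1 := by
      rw [ENNReal.ofReal_lt_one]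
      exact Real.rpow_lt_one (by norm_num) (by norm_num) (by rw [ht₁]; linarith)
    exact ENNReal.mul_ne_top (ENNReal.mul_ne_top ENNReal.ofReal_ne_top hVfin)
      (ENNReal.inv_ne_top.2 (tsub_pos_of_lt h1).ne')
  have hCtfin : Ct ≠ ∞ := by
    have h1 : ENNReal.ofReal ((2:ℝ) ^ ((N:ℝ) + t₂)) < 1 := by
      rw [ENNReal.ofReal_lt_one]
      exact Real.rpow_lt_one_of_one_lt_of_neg one_lt_two (by rw [ht₂]; linarith)
    exact ENNReal.mul_ne_top (ENNReal.mul_ne_top ENNReal.ofReal_ne_top hVfin)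
      (ENNReal.inv_ne_top.2 (tsub_pos_of_lt h1).ne')
  refine ⟨ENNReal.ofReal (L^2) * Cb * ENNReal.ofReal (ρ^(2:ℝ)) + ENNReal.ofReal 4 * Ct,
    ?_, ?_⟩
  · exact ENNReal.add_ne_top.2 ⟨ENNReal.mul_ne_top
      (ENNReal.mul_ne_top ENNReal.ofReal_ne_top hCbfin) ENNReal.ofReal_ne_top,
      ENNReal.mul_ne_top ENNReal.ofReal_ne_top hCtfin⟩
  intro φ hφ hφ1 x
  have hP0 : (0:ℝ) < (N:ℝ) + 2*s := by positivity
  -- split the inner integral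
  rw [← lintegral_add_compl (fun y => ENNReal.ofReal
      (‖φ x - φ y‖ ^ 2 / ‖x - y‖ ^ ((N : ℝ) + 2 * s)))
      (measurableSet_ball (x := x) (ε := ρ))]
  have hnear : (∫⁻ y in ball x ρ, ENNReal.ofReal
        (‖φ x - φ y‖ ^ 2 / ‖x - y‖ ^ ((N : ℝ) + 2 * s)))
      ≤ (ENNReal.ofReal (L^2) * Cb * ENNReal.ofReal (ρ^(2:ℝ)))
          * ENNReal.ofReal (ρ ^ (-(2 * s))) := by
    have hpt : ∀ y ∈ ball x ρ, ENNReal.ofReal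
        (‖φ x - φ y‖ ^ 2 / ‖x - y‖ ^ ((N : ℝ) + 2 * s))
        ≤ ENNReal.ofReal (L^2 * dist y x ^ t₁) := by
      intro y _
      apply ENNReal.ofReal_le_ofReal
      rcases eq_or_ne x y with rfl | hne
      · simp only [sub_self, map_zero, norm_zero]
        rw [zero_pow two_ne_zero, zero_div]
        positivity
      · have hd : 0 < dist x y := dist_pos.2 hne
        have hnorm : ‖x - y‖ = dist x y := (dist_eq_norm x y).symm
        have hab : ‖φ x - φ y‖ ≤ L * dist x y := by
          have := hφ.dist_le_mul x y
          rwa [Complex.dist_eq, Real.coe_toNNReal L hL] at this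
        have hsq : ‖φ x - φ y‖ ^ 2 ≤ (L * dist x y) ^ 2 :=
          pow_le_pow_left₀ (norm_nonneg _) hab 2
        rw [hnorm, dist_comm y x]
        calc ‖φ x - φ y‖ ^ 2 / dist x y ^ ((N : ℝ) + 2 * s)
            ≤ (L * dist x y) ^ 2 / dist x y ^ ((N : ℝ) + 2 * s) := by
              gcongr
          _ = L^2 * dist x y ^ t₁ := by
              rw [mul_pow, mul_div_assoc]
              congr 1
              rw [← Real.rpow_natCast (dist x y) 2, ← Real.rpow_sub hd, ht₁]
              norm_num
    calc (∫⁻ y in ball x ρ, ENNReal.ofReal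
          (‖φ x - φ y‖ ^ 2 / ‖x - y‖ ^ ((N : ℝ) + 2 * s)))
        ≤ ∫⁻ y in ball x ρ, ENNReal.ofReal (L^2 * dist y x ^ t₁) :=
          setLIntegral_mono
            (measurable_const.mul ((measurable_id.dist
              measurable_const).pow measurable_const)).ennreal_ofReal hpt
      _ = ENNReal.ofReal (L^2) * ∫⁻ y in ball x ρ, ENNReal.ofReal (dist y x ^ t₁) := by
          rw [← lintegral_const_mul' _ _ ENNReal.ofReal_ne_top]
          congr 1; funext y
          rw [← ENNReal.ofReal_mul (by positivity)]
      _ ≤ ENNReal.ofReal (L^2) * ((ENNReal.ofReal ((2:ℝ) ^ |t₁|) * V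
            * (1 - ENNReal.ofReal ((2⁻¹:ℝ) ^ ((N:ℝ) + t₁)))⁻¹)
            * ENNReal.ofReal (ρ ^ ((N:ℝ) + t₁))) := by
          exact mul_le_mul_right (radial_ball hN t₁ (by rw [ht₁]; linarith) x ρ hρ) _
      _ = (ENNReal.ofReal (L^2) * Cb * ENNReal.ofReal (ρ^(2:ℝ)))
            * ENNReal.ofReal (ρ ^ (-(2 * s))) := by
          rw [← hCb]
          have : ENNReal.ofReal (ρ ^ ((N:ℝ) + t₁))
              = ENNReal.ofReal (ρ^(2:ℝ)) * ENNReal.ofReal (ρ ^ (-(2 * s))) := by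
            rw [← ENNReal.ofReal_mul (by positivity), ← Real.rpow_add hρ]
            congr 1
            rw [ht₁]; ring
          rw [this]; ring
  have hfar : (∫⁻ y in (ball x ρ)ᶜ, ENNReal.ofReal
        (‖φ x - φ y‖ ^ 2 / ‖x - y‖ ^ ((N : ℝ) + 2 * s)))
      ≤ (ENNReal.ofReal 4 * Ct) * ENNReal.ofReal (ρ ^ (-(2 * s))) := by
    have hpt : ∀ y ∈ (ball x ρ)ᶜ, ENNReal.ofReal
        (‖φ x - φ y‖ ^ 2 / ‖x - y‖ ^ ((N : ℝ) + 2 * s))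
        ≤ ENNReal.ofReal (4 * dist y x ^ t₂) := by
      intro y _
      apply ENNReal.ofReal_le_ofReal
      rcases eq_or_ne x y with rfl | hne
      · simp only [sub_self, map_zero, norm_zero]
        rw [zero_pow two_ne_zero, zero_div]
        positivity
      · have hd : 0 < dist x y := dist_pos.2 hne
        have hnorm : ‖x - y‖ = dist x y := (dist_eq_norm x y).symm
        have hab : ‖φ x - φ y‖ ≤ 2 := by
          have h3 := norm_sub_le (φ x) (φ y)
          have := hφ1 x; have := hφ1 y; linarith
        have hsq : ‖φ x - φ y‖ ^ 2 ≤ 4 := by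
          nlinarith [norm_nonneg (φ x - φ y)]
        rw [hnorm, dist_comm y x]
        calc ‖φ x - φ y‖ ^ 2 / dist x y ^ ((N : ℝ) + 2 * s)
            ≤ 4 / dist x y ^ ((N : ℝ) + 2 * s) := by gcongr
          _ = 4 * dist x y ^ t₂ := by
              rw [ht₂, Real.rpow_neg hd.le, div_eq_mul_inv]
    calc (∫⁻ y in (ball x ρ)ᶜ, ENNReal.ofReal
          (‖φ x - φ y‖ ^ 2 / ‖x - y‖ ^ ((N : ℝ) + 2 * s)))
        ≤ ∫⁻ y in (ball x ρ)ᶜ, ENNReal.ofReal (4 * dist y x ^ t₂) :=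
          setLIntegral_mono
            (measurable_const.mul ((measurable_id.dist
              measurable_const).pow measurable_const)).ennreal_ofReal hpt
      _ = ENNReal.ofReal 4 * ∫⁻ y in (ball x ρ)ᶜ, ENNReal.ofReal (dist y x ^ t₂) := by
          rw [← lintegral_const_mul' _ _ ENNReal.ofReal_ne_top]
          congr 1; funext y
          rw [← ENNReal.ofReal_mul (by positivity)]
      _ ≤ ENNReal.ofReal 4 * ((ENNReal.ofReal ((2:ℝ) ^ (N:ℕ)) * V
            * (1 - ENNReal.ofReal ((2:ℝ) ^ ((N:ℝ) + t₂)))⁻¹)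
            * ENNReal.ofReal (ρ ^ ((N:ℝ) + t₂))) :=
          mul_le_mul_right (radial_compl hN t₂ (by rw [ht₂]; linarith) x ρ hρ) _
      _ = (ENNReal.ofReal 4 * Ct) * ENNReal.ofReal (ρ ^ (-(2 * s))) := by
          rw [← hCt]
          have : ((N:ℝ) + t₂) = -(2*s) := by rw [ht₂]; ring
          rw [this]; ring
  calc (∫⁻ y in ball x ρ, ENNReal.ofReal
          (‖φ x - φ y‖ ^ 2 / ‖x - y‖ ^ ((N : ℝ) + 2 * s)))
        + (∫⁻ y in (ball x ρ)ᶜ, ENNReal.ofReal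
          (‖φ x - φ y‖ ^ 2 / ‖x - y‖ ^ ((N : ℝ) + 2 * s)))
      ≤ (ENNReal.ofReal (L^2) * Cb * ENNReal.ofReal (ρ^(2:ℝ)))
          * ENNReal.ofReal (ρ ^ (-(2 * s)))
        + (ENNReal.ofReal 4 * Ct) * ENNReal.ofReal (ρ ^ (-(2 * s))) := add_le_add hnear hfar
    _ = (ENNReal.ofReal (L^2) * Cb * ENNReal.ofReal (ρ^(2:ℝ)) + ENNReal.ofReal 4 * Ct)
          * ENNReal.ofReal (ρ ^ (-(2 * s))) := by ring

lemma g_far {N : ℕ} (hN : 1 ≤ N) {s ρ : ℝ} (hs0 : 0 < s) (hρ : 0 < ρ)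
    (x₀ : EuclideanSpace ℝ (Fin N)) {K : ℝ} (hK : 4 < K)
    (φ : EuclideanSpace ℝ (Fin N) → ℂ) (c : ℂ)
    (hc : ∀ z ∉ ball x₀ (2 * ρ), φ z = c) (hφ1 : ∀ z, ‖φ z‖ ≤ 1)
    {x : EuclideanSpace ℝ (Fin N)} (hx : x ∉ ball x₀ (K * ρ)) :
    (∫⁻ y, ENNReal.ofReal
        (‖φ x - φ y‖ ^ 2 / ‖x - y‖ ^ ((N : ℝ) + 2 * s)))
      ≤ (ENNReal.ofReal (4 * 2 ^ ((N:ℝ) + 2*s) * (2*ρ) ^ (N:ℕ))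
          * volume (ball (0 : EuclideanSpace ℝ (Fin N)) 1))
        * ENNReal.ofReal (dist x x₀ ^ (-((N:ℝ) + 2*s))) := by
  classical
  haveI : Nontrivial (EuclideanSpace ℝ (Fin N)) := by
    apply Module.nontrivial_of_finrank_pos (R := ℝ)
    rw [finrank_euclideanSpace_fin]; omega
  have hP0 : (0:ℝ) < (N:ℝ) + 2*s := by positivity
  have hdx : K * ρ ≤ dist x x₀ := by simpa [mem_ball, not_lt] using hx
  have hdx0 : (0:ℝ) < dist x x₀ := lt_of_lt_of_le (by nlinarith) hdx
  have hφx : φ x = c := by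
    apply hc
    intro hmem
    have := mem_ball.1 hmem
    nlinarith
  rw [← lintegral_add_compl (fun y => ENNReal.ofReal
      (‖φ x - φ y‖ ^ 2 / ‖x - y‖ ^ ((N : ℝ) + 2 * s)))
      (measurableSet_ball (x := x₀) (ε := 2 * ρ))]
  have hzero : (∫⁻ y in (ball x₀ (2*ρ))ᶜ, ENNReal.ofReal
      (‖φ x - φ y‖ ^ 2 / ‖x - y‖ ^ ((N : ℝ) + 2 * s))) = 0 := by
    refine le_antisymm ?_ zero_le
    have : ∀ y ∈ (ball x₀ (2*ρ))ᶜ, ENNReal.ofReal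
        (‖φ x - φ y‖ ^ 2 / ‖x - y‖ ^ ((N : ℝ) + 2 * s)) ≤ 0 := by
      intro y hy
      rw [hφx, hc y hy, sub_self, norm_zero, zero_pow two_ne_zero, zero_div]
      simp
    calc (∫⁻ y in (ball x₀ (2*ρ))ᶜ, ENNReal.ofReal
        (‖φ x - φ y‖ ^ 2 / ‖x - y‖ ^ ((N : ℝ) + 2 * s)))
        ≤ ∫⁻ _ in (ball x₀ (2*ρ))ᶜ, (0:ℝ≥0∞) := setLIntegral_mono measurable_const this
      _ = 0 := by simp
  have hmain : (∫⁻ y in ball x₀ (2*ρ), ENNReal.ofReal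
      (‖φ x - φ y‖ ^ 2 / ‖x - y‖ ^ ((N : ℝ) + 2 * s)))
      ≤ (ENNReal.ofReal (4 * 2 ^ ((N:ℝ) + 2*s) * (2*ρ) ^ (N:ℕ))
          * volume (ball (0 : EuclideanSpace ℝ (Fin N)) 1))
        * ENNReal.ofReal (dist x x₀ ^ (-((N:ℝ) + 2*s))) := by
    have hpt : ∀ y ∈ ball x₀ (2*ρ), ENNReal.ofReal
        (‖φ x - φ y‖ ^ 2 / ‖x - y‖ ^ ((N : ℝ) + 2 * s))
        ≤ ENNReal.ofReal (4 * 2 ^ ((N:ℝ) + 2*s) * dist x x₀ ^ (-((N:ℝ) + 2*s))) := by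
      intro y hy
      apply ENNReal.ofReal_le_ofReal
      have hyx₀ : dist y x₀ < 2 * ρ := mem_ball.1 hy
      have hxy : dist x x₀ / 2 ≤ dist x y := by
        have htri : dist x x₀ ≤ dist x y + dist y x₀ := dist_triangle x y x₀
        nlinarith
      have hxy0 : (0:ℝ) < dist x y := lt_of_lt_of_le (by linarith) hxy
      have hnorm : ‖x - y‖ = dist x y := (dist_eq_norm x y).symm
      have hab : ‖φ x - φ y‖ ≤ 2 := by
        have h3 := norm_sub_le (φ x) (φ y)
        have := hφ1 x; have := hφ1 y; linarith
      have hsq : ‖φ x - φ y‖ ^ 2 ≤ 4 := by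
        nlinarith [norm_nonneg (φ x - φ y)]
      rw [hnorm]
      calc ‖φ x - φ y‖ ^ 2 / dist x y ^ ((N : ℝ) + 2 * s)
          ≤ 4 / dist x y ^ ((N : ℝ) + 2 * s) := by gcongr
        _ = 4 * dist x y ^ (-((N:ℝ) + 2*s)) := by
            rw [Real.rpow_neg hxy0.le, div_eq_mul_inv]
        _ ≤ 4 * (dist x x₀ / 2) ^ (-((N:ℝ) + 2*s)) := by
            have := Real.rpow_le_rpow_of_nonpos (by linarith : (0:ℝ) < dist x x₀ / 2)
              hxy (by linarith : -((N:ℝ) + 2*s) ≤ 0)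
            linarith [this, (by positivity : (0:ℝ) ≤ (4:ℝ))]
        _ = 4 * 2 ^ ((N:ℝ) + 2*s) * dist x x₀ ^ (-((N:ℝ) + 2*s)) := by
            rw [div_eq_mul_inv, Real.mul_rpow hdx0.le (by norm_num),
              Real.inv_rpow (by norm_num), Real.rpow_neg (by norm_num : (0:ℝ) ≤ 2),
              inv_inv]
            ring
    calc (∫⁻ y in ball x₀ (2*ρ), ENNReal.ofReal
        (‖φ x - φ y‖ ^ 2 / ‖x - y‖ ^ ((N : ℝ) + 2 * s)))
        ≤ ∫⁻ _ in ball x₀ (2*ρ), ENNReal.ofReal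
            (4 * 2 ^ ((N:ℝ) + 2*s) * dist x x₀ ^ (-((N:ℝ) + 2*s))) :=
          setLIntegral_mono measurable_const hpt
      _ = ENNReal.ofReal (4 * 2 ^ ((N:ℝ) + 2*s) * dist x x₀ ^ (-((N:ℝ) + 2*s)))
            * volume (ball x₀ (2*ρ)) := setLIntegral_const _ _
      _ = (ENNReal.ofReal (4 * 2 ^ ((N:ℝ) + 2*s) * (2*ρ) ^ (N:ℕ))
            * volume (ball (0 : EuclideanSpace ℝ (Fin N)) 1))
          * ENNReal.ofReal (dist x x₀ ^ (-((N:ℝ) + 2*s))) := by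
          rw [Measure.addHaar_ball volume x₀ (by linarith : (0:ℝ) ≤ 2*ρ),
            finrank_euclideanSpace_fin, ← mul_assoc, ← ENNReal.ofReal_mul (by positivity)]
          have h4 : (0:ℝ) ≤ 4 * 2 ^ ((N:ℝ) + 2*s) := by positivity
          have hdt : (0:ℝ) ≤ dist x x₀ ^ (-((N:ℝ) + 2*s)) := by positivity
          rw [ENNReal.ofReal_mul h4, ENNReal.ofReal_mul (mul_nonneg h4 hdt),
            ENNReal.ofReal_mul h4]
          ring
  rw [hzero, add_zero]
  exact hmain

/-- Cutoff commutator estimate (4.6): for a Lipschitz cutoff `φ`, bounded by 1 and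
constant outside `B(x₀, 2ρ)`, and any `K > 4`,
`∬ |φ(x)-φ(y)|²|u(x)|²/|x-y|^{N+2s} ≤ C ρ^{-2s} ∫_{B(x₀,Kρ)} |u|² + C K^{-N} ‖u‖²_{L^{2*}}`,
with `C = C(N, s, Lρ)`. -/
theorem cutoff_commutator (N : ℕ) (hN : 1 ≤ N) (s : ℝ) (hs0 : 0 < s) (hs1 : s < 1)
    (hNs : 2 * s < (N : ℝ)) (L ρ : ℝ) (hL : 0 ≤ L) (hρ : 0 < ρ) :
    ∃ C : ℝ, 0 < C ∧
      ∀ (u φ : EuclideanSpace ℝ (Fin N) → ℂ) (x₀ : EuclideanSpace ℝ (Fin N)) (K : ℝ),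
        4 < K →
        MemLp u 2 (volume : Measure (EuclideanSpace ℝ (Fin N))) →
        MemLp u (ENNReal.ofReal (2 * (N : ℝ) / ((N : ℝ) - 2 * s)))
          (volume : Measure (EuclideanSpace ℝ (Fin N))) →
        LipschitzWith (Real.toNNReal L) φ →
        (∀ x, ‖φ x‖ ≤ 1) →
        (∃ c : ℂ, ∀ x ∉ Metric.ball x₀ (2 * ρ), φ x = c) →
        (∫⁻ x : EuclideanSpace ℝ (Fin N), ∫⁻ y : EuclideanSpace ℝ (Fin N),
            ENNReal.ofReal (‖φ x - φ y‖ ^ 2 * ‖u x‖ ^ 2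
              / ‖x - y‖ ^ ((N : ℝ) + 2 * s)))
          ≤ ENNReal.ofReal (C * ρ ^ (-(2 * s)))
              * (∫⁻ x in Metric.ball x₀ (K * ρ), ENNReal.ofReal (‖u x‖ ^ 2))
            + ENNReal.ofReal (C * K ^ (-(N : ℝ)))
              * (∫⁻ x : EuclideanSpace ℝ (Fin N),
                  ENNReal.ofReal (‖u x‖ ^ (2 * (N : ℝ) / ((N : ℝ) - 2 * s))))
                ^ (((N : ℝ) - 2 * s) / (N : ℝ)) := by
  classical
  have hNpos : (0:ℝ) < (N:ℝ) := by linarith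
  have hN2 : (0:ℝ) < (N:ℝ) - 2*s := by linarith
  have hs2 : (0:ℝ) < 2*s := by linarith
  obtain ⟨D₁, hD₁fin, hD₁⟩ := g_bound hN hs0 hs1 hNs hL hρ
  have hVfin : volume (ball (0 : EuclideanSpace ℝ (Fin N)) 1) ≠ ∞ := measure_ball_lt_top.ne
  have hp0 : (0:ℝ) < (N:ℝ)/((N:ℝ)-2*s) := by positivity
  have hq0 : (0:ℝ) < (N:ℝ)/(2*s) := by positivity
  have hpq : ((N:ℝ)/((N:ℝ)-2*s)).HolderConjugate ((N:ℝ)/(2*s)) := by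
    constructor
    · rw [inv_div, inv_div, inv_one]
      field_simp
      ring
    · exact hp0
    · exact hq0
  have ht₃neg : (N:ℝ) + -((N:ℝ)+2*s) * ((N:ℝ)/(2*s)) < 0 := by
    have heq : (N:ℝ) + -((N:ℝ)+2*s) * ((N:ℝ)/(2*s)) = -((N:ℝ)^2)/(2*s) := by
      field_simp
      ring
    rw [heq]
    apply div_neg_of_neg_of_pos _ hs2
    nlinarith
  have ht₃le : -((N:ℝ)+2*s) * ((N:ℝ)/(2*s)) ≤ 0 := by
    apply mul_nonpos_of_nonpos_of_nonneg _ hq0.le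
    linarith
  have hCt3fin : ENNReal.ofReal ((2:ℝ)^(N:ℕ)) * volume (ball (0 : EuclideanSpace ℝ (Fin N)) 1)
      * (1 - ENNReal.ofReal ((2:ℝ) ^ ((N:ℝ) + -((N:ℝ)+2*s) * ((N:ℝ)/(2*s)))))⁻¹ ≠ ∞ := by
    have h1 : ENNReal.ofReal ((2:ℝ) ^ ((N:ℝ) + -((N:ℝ)+2*s) * ((N:ℝ)/(2*s)))) < 1 := by
      rw [ENNReal.ofReal_lt_one]
      exact Real.rpow_lt_one_of_one_lt_of_neg one_lt_two ht₃neg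
    exact ENNReal.mul_ne_top (ENNReal.mul_ne_top ENNReal.ofReal_ne_top hVfin)
      (ENNReal.inv_ne_top.2 (tsub_pos_of_lt h1).ne')
  set Ct3 : ℝ≥0∞ := ENNReal.ofReal ((2:ℝ)^(N:ℕ))
      * volume (ball (0 : EuclideanSpace ℝ (Fin N)) 1)
      * (1 - ENNReal.ofReal ((2:ℝ) ^ ((N:ℝ) + -((N:ℝ)+2*s) * ((N:ℝ)/(2*s)))))⁻¹ with hCt3def
  set E : ℝ≥0∞ := ENNReal.ofReal (4 * 2 ^ ((N:ℝ) + 2*s) * (2*ρ) ^ (N:ℕ))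
      * volume (ball (0 : EuclideanSpace ℝ (Fin N)) 1) with hEdef
  have hEfin : E ≠ ∞ := ENNReal.mul_ne_top ENNReal.ofReal_ne_top hVfin
  set D₂ : ℝ≥0∞ := E * Ct3 ^ (1/((N:ℝ)/(2*s))) * ENNReal.ofReal (ρ ^ (-(N:ℝ))) with hD₂def
  have hD₂fin : D₂ ≠ ∞ := ENNReal.mul_ne_top (ENNReal.mul_ne_top hEfin
    (ENNReal.rpow_ne_top_of_nonneg (by positivity) hCt3fin)) ENNReal.ofReal_ne_top
  have hC0 : (0:ℝ) < D₁.toReal + D₂.toReal + 1 := by positivity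
  refine ⟨D₁.toReal + D₂.toReal + 1, hC0, ?_⟩
  intro u φ x₀ K hK hu2 hup hφ hφ1 hconst
  obtain ⟨c, hc⟩ := hconst
  have hKρ : (0:ℝ) < K * ρ := by nlinarith
  have hCD₁ : D₁ ≤ ENNReal.ofReal (D₁.toReal + D₂.toReal + 1) := by
    rw [← ENNReal.ofReal_toReal hD₁fin]
    apply ENNReal.ofReal_le_ofReal
    have := ENNReal.toReal_nonneg (a := D₂)
    rw [ENNReal.toReal_ofReal (by positivity)]
    linarith
  have hCD₂ : D₂ ≤ ENNReal.ofReal (D₁.toReal + D₂.toReal + 1) := by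
    rw [← ENNReal.ofReal_toReal hD₂fin]
    apply ENNReal.ofReal_le_ofReal
    have := ENNReal.toReal_nonneg (a := D₁)
    rw [ENNReal.toReal_ofReal (by positivity)]
    linarith
  have hmu : AEMeasurable (fun x => ENNReal.ofReal (‖u x‖ ^ 2)) volume := by
    have h1 : AEMeasurable (fun x => ‖u x‖) volume :=
      hu2.aestronglyMeasurable.aemeasurable.norm
    have h2 : AEMeasurable (fun x : EuclideanSpace ℝ (Fin N) => ‖u x‖ ^ (2:ℕ)) volume :=
      h1.pow aemeasurable_const
    exact (h2.ennreal_ofReal).congr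
      (Filter.Eventually.of_forall fun x => by simp)
  -- Step 1: factor out |u(x)|² from the inner integral
  have hsplit : ∀ x : EuclideanSpace ℝ (Fin N),
      (∫⁻ y, ENNReal.ofReal (‖φ x - φ y‖ ^ 2 * ‖u x‖ ^ 2
        / ‖x - y‖ ^ ((N:ℝ) + 2*s)))
      = ENNReal.ofReal (‖u x‖ ^ 2)
        * ∫⁻ y, ENNReal.ofReal (‖φ x - φ y‖ ^ 2 / ‖x - y‖ ^ ((N:ℝ) + 2*s)) := by
    intro x
    rw [← lintegral_const_mul' _ _ ENNReal.ofReal_ne_top]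
    congr 1; funext y
    rw [← ENNReal.ofReal_mul (by positivity)]
    congr 1
    ring
  rw [lintegral_congr hsplit,
    ← lintegral_add_compl (fun x => ENNReal.ofReal (‖u x‖ ^ 2)
      * ∫⁻ y, ENNReal.ofReal (‖φ x - φ y‖ ^ 2 / ‖x - y‖ ^ ((N:ℝ) + 2*s)))
      (measurableSet_ball (x := x₀) (ε := K*ρ))]
  have hpart1 : (∫⁻ x in ball x₀ (K*ρ), ENNReal.ofReal (‖u x‖ ^ 2)
        * ∫⁻ y, ENNReal.ofReal (‖φ x - φ y‖ ^ 2 / ‖x - y‖ ^ ((N:ℝ) + 2*s)))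
      ≤ ENNReal.ofReal ((D₁.toReal + D₂.toReal + 1) * ρ ^ (-(2 * s)))
        * ∫⁻ x in ball x₀ (K*ρ), ENNReal.ofReal (‖u x‖ ^ 2) := by
    calc (∫⁻ x in ball x₀ (K*ρ), ENNReal.ofReal (‖u x‖ ^ 2)
          * ∫⁻ y, ENNReal.ofReal (‖φ x - φ y‖ ^ 2 / ‖x - y‖ ^ ((N:ℝ) + 2*s)))
        ≤ ∫⁻ x in ball x₀ (K*ρ), ENNReal.ofReal (‖u x‖ ^ 2)
            * (D₁ * ENNReal.ofReal (ρ ^ (-(2 * s)))) :=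
          setLIntegral_mono' measurableSet_ball
            (fun x _ => mul_le_mul_right (hD₁ φ hφ hφ1 x) _)
      _ = (∫⁻ x in ball x₀ (K*ρ), ENNReal.ofReal (‖u x‖ ^ 2))
            * (D₁ * ENNReal.ofReal (ρ ^ (-(2 * s)))) :=
          lintegral_mul_const' _ _ (ENNReal.mul_ne_top hD₁fin ENNReal.ofReal_ne_top)
      _ ≤ (∫⁻ x in ball x₀ (K*ρ), ENNReal.ofReal (‖u x‖ ^ 2))
            * (ENNReal.ofReal (D₁.toReal + D₂.toReal + 1)
                * ENNReal.ofReal (ρ ^ (-(2 * s)))) :=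
          mul_le_mul_right (mul_le_mul_left hCD₁ _) _
      _ = ENNReal.ofReal ((D₁.toReal + D₂.toReal + 1) * ρ ^ (-(2 * s)))
            * ∫⁻ x in ball x₀ (K*ρ), ENNReal.ofReal (‖u x‖ ^ 2) := by
          rw [← ENNReal.ofReal_mul hC0.le]
          ring
  have hfp : ∀ x : EuclideanSpace ℝ (Fin N),
      (ENNReal.ofReal (‖u x‖ ^ 2)) ^ ((N:ℝ)/((N:ℝ)-2*s))
      = ENNReal.ofReal (‖u x‖ ^ (2 * (N:ℝ) / ((N:ℝ) - 2 * s))) := by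
    intro x
    rw [ENNReal.ofReal_rpow_of_nonneg (by positivity) hp0.le]
    congr 1
    rw [← Real.rpow_natCast (‖u x‖) 2,
      ← Real.rpow_mul (norm_nonneg _)]
    congr 1
    push_cast
    ring
  have hhq : ∀ x : EuclideanSpace ℝ (Fin N),
      (ENNReal.ofReal (dist x x₀ ^ (-((N:ℝ) + 2*s)))) ^ ((N:ℝ)/(2*s))
      = ENNReal.ofReal (dist x x₀ ^ (-((N:ℝ)+2*s) * ((N:ℝ)/(2*s)))) := by
    intro x
    rw [ENNReal.ofReal_rpow_of_nonneg (by positivity) hq0.le,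
      ← Real.rpow_mul dist_nonneg]
  have hexp : ((N:ℝ) + -((N:ℝ)+2*s) * ((N:ℝ)/(2*s))) * (1/((N:ℝ)/(2*s))) = -(N:ℝ) := by
    rw [one_div_div]
    field_simp
    ring
  have hfac2 : (Ct3 * ENNReal.ofReal ((K*ρ) ^ ((N:ℝ) + -((N:ℝ)+2*s) * ((N:ℝ)/(2*s)))))
        ^ (1/((N:ℝ)/(2*s)))
      = Ct3 ^ (1/((N:ℝ)/(2*s)))
        * (ENNReal.ofReal (K ^ (-(N:ℝ))) * ENNReal.ofReal (ρ ^ (-(N:ℝ)))) := by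
    rw [ENNReal.mul_rpow_of_nonneg _ _ (by positivity),
      ENNReal.ofReal_rpow_of_nonneg (by positivity) (by positivity),
      ← Real.rpow_mul hKρ.le, hexp,
      Real.mul_rpow (by linarith : (0:ℝ) ≤ K) hρ.le,
      ENNReal.ofReal_mul (by positivity)]
  have hh : AEMeasurable (fun x : EuclideanSpace ℝ (Fin N) =>
      ENNReal.ofReal (dist x x₀ ^ (-((N:ℝ) + 2*s))))
      ((volume : Measure (EuclideanSpace ℝ (Fin N))).restrict (ball x₀ (K*ρ))ᶜ) :=
    (((measurable_id.dist measurable_const).pow measurable_const).ennreal_ofReal).aemeasurable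
  have htail : (∫⁻ x in (ball x₀ (K*ρ))ᶜ,
        (ENNReal.ofReal (dist x x₀ ^ (-((N:ℝ) + 2*s)))) ^ ((N:ℝ)/(2*s)))
      ≤ Ct3 * ENNReal.ofReal ((K*ρ) ^ ((N:ℝ) + -((N:ℝ)+2*s) * ((N:ℝ)/(2*s)))) := by
    calc (∫⁻ x in (ball x₀ (K*ρ))ᶜ,
          (ENNReal.ofReal (dist x x₀ ^ (-((N:ℝ) + 2*s)))) ^ ((N:ℝ)/(2*s)))
        = ∫⁻ x in (ball x₀ (K*ρ))ᶜ,
            ENNReal.ofReal (dist x x₀ ^ (-((N:ℝ)+2*s) * ((N:ℝ)/(2*s)))) :=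
          lintegral_congr fun x => hhq x
      _ ≤ Ct3 * ENNReal.ofReal ((K*ρ) ^ ((N:ℝ) + -((N:ℝ)+2*s) * ((N:ℝ)/(2*s)))) :=
          radial_compl hN _ ht₃le x₀ (K*ρ) hKρ
  have hpart2 : (∫⁻ x in (ball x₀ (K*ρ))ᶜ, ENNReal.ofReal (‖u x‖ ^ 2)
        * ∫⁻ y, ENNReal.ofReal (‖φ x - φ y‖ ^ 2 / ‖x - y‖ ^ ((N:ℝ) + 2*s)))
      ≤ ENNReal.ofReal ((D₁.toReal + D₂.toReal + 1) * K ^ (-(N:ℝ)))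
        * (∫⁻ x, ENNReal.ofReal (‖u x‖ ^ (2 * (N:ℝ) / ((N:ℝ) - 2 * s))))
          ^ (((N:ℝ) - 2*s) / (N:ℝ)) := by
    have hHolder := ENNReal.lintegral_mul_le_Lp_mul_Lq
      ((volume : Measure (EuclideanSpace ℝ (Fin N))).restrict (ball x₀ (K*ρ))ᶜ) hpq
      (hmu.restrict) hh
    simp only [Pi.mul_apply] at hHolder
    calc (∫⁻ x in (ball x₀ (K*ρ))ᶜ, ENNReal.ofReal (‖u x‖ ^ 2)
          * ∫⁻ y, ENNReal.ofReal (‖φ x - φ y‖ ^ 2 / ‖x - y‖ ^ ((N:ℝ) + 2*s)))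
        ≤ ∫⁻ x in (ball x₀ (K*ρ))ᶜ, ENNReal.ofReal (‖u x‖ ^ 2)
            * (E * ENNReal.ofReal (dist x x₀ ^ (-((N:ℝ) + 2*s)))) :=
          setLIntegral_mono' measurableSet_ball.compl
            (fun x hx => mul_le_mul_right (g_far hN hs0 hρ x₀ hK φ c hc hφ1 hx) _)
      _ = E * ∫⁻ x in (ball x₀ (K*ρ))ᶜ, ENNReal.ofReal (‖u x‖ ^ 2)
            * ENNReal.ofReal (dist x x₀ ^ (-((N:ℝ) + 2*s))) := by
          rw [← lintegral_const_mul' E _ hEfin]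
          exact lintegral_congr fun x => by ring
      _ ≤ E * ((∫⁻ x in (ball x₀ (K*ρ))ᶜ,
              (ENNReal.ofReal (‖u x‖ ^ 2)) ^ ((N:ℝ)/((N:ℝ)-2*s)))
                ^ (1/((N:ℝ)/((N:ℝ)-2*s)))
            * (∫⁻ x in (ball x₀ (K*ρ))ᶜ,
              (ENNReal.ofReal (dist x x₀ ^ (-((N:ℝ) + 2*s)))) ^ ((N:ℝ)/(2*s)))
                ^ (1/((N:ℝ)/(2*s)))) := mul_le_mul_right hHolder _
      _ ≤ E * ((∫⁻ x, (ENNReal.ofReal (‖u x‖ ^ 2)) ^ ((N:ℝ)/((N:ℝ)-2*s)))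
                ^ (1/((N:ℝ)/((N:ℝ)-2*s)))
            * (Ct3 * ENNReal.ofReal ((K*ρ) ^ ((N:ℝ) + -((N:ℝ)+2*s) * ((N:ℝ)/(2*s)))))
                ^ (1/((N:ℝ)/(2*s)))) := by
          apply mul_le_mul_right
          apply mul_le_mul'
          · exact ENNReal.rpow_le_rpow (setLIntegral_le_lintegral _ _) (by positivity)
          · exact ENNReal.rpow_le_rpow htail (by positivity)
      _ = (D₂ * ENNReal.ofReal (K ^ (-(N:ℝ))))
            * (∫⁻ x, ENNReal.ofReal (‖u x‖ ^ (2 * (N:ℝ) / ((N:ℝ) - 2 * s))))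
              ^ (((N:ℝ) - 2*s) / (N:ℝ)) := by
          rw [hfac2, lintegral_congr hfp, one_div_div, hD₂def]
          ring
      _ ≤ (ENNReal.ofReal (D₁.toReal + D₂.toReal + 1) * ENNReal.ofReal (K ^ (-(N:ℝ))))
            * (∫⁻ x, ENNReal.ofReal (‖u x‖ ^ (2 * (N:ℝ) / ((N:ℝ) - 2 * s))))
              ^ (((N:ℝ) - 2*s) / (N:ℝ)) :=
          mul_le_mul_left (mul_le_mul_left hCD₂ _) _
      _ = ENNReal.ofReal ((D₁.toReal + D₂.toReal + 1) * K ^ (-(N:ℝ)))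
            * (∫⁻ x, ENNReal.ofReal (‖u x‖ ^ (2 * (N:ℝ) / ((N:ℝ) - 2 * s))))
              ^ (((N:ℝ) - 2*s) / (N:ℝ)) := by
          rw [← ENNReal.ofReal_mul hC0.le]
  exact add_le_add hpart1 hpart2
end

section
/- Let V : ℝ^N → ℝ be continuous and nonnegative with the property that for some τ₀ > 0 the set {x : V(x) < τ₀} has finite Lebesgue measure. Let 0 < s < 1, N > 2s, 2* = 2N/(N-2s). Then there is a constant c > 0 such that for every u ∈ H^s(ℝ^N) with ∫ V|u|² dx < ∞, ‖u‖²_{L²(ℝ^N)} ≤ c ([u]_s² + ∫_{ℝ^N} V(x)|u(x)|² dx). -/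
open MeasureTheory ENNReal

/-- Continuous embedding `E ↪ L²` under assumption (V): if `V` is continuous, nonnegative,
and `{V < τ₀}` has finite measure for some `τ₀ > 0`, then
`‖u‖²_{L²} ≤ c ([u]_s² + ∫ V |u|²)` for all `u ∈ H^s` with `∫ V|u|² < ∞`. -/
theorem embedding_L2 (N : ℕ) (hN : 1 ≤ N) (s : ℝ) (hs0 : 0 < s) (hs1 : s < 1)
    (hNs : 2 * s < (N : ℝ)) (V : EuclideanSpace ℝ (Fin N) → ℝ)
    (hVcont : Continuous V) (hVnonneg : ∀ x, 0 ≤ V x)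
    (τ₀ : ℝ) (hτ₀ : 0 < τ₀)
    (hVfin : volume {x : EuclideanSpace ℝ (Fin N) | V x < τ₀} < ⊤) :
    ∃ c : ℝ, 0 < c ∧
      ∀ u : EuclideanSpace ℝ (Fin N) → ℂ,
        MemLp u 2 (volume : Measure (EuclideanSpace ℝ (Fin N))) →
        (∫⁻ x : EuclideanSpace ℝ (Fin N), ∫⁻ y : EuclideanSpace ℝ (Fin N),
            ENNReal.ofReal (‖u x - u y‖ ^ 2 / ‖x - y‖ ^ ((N : ℝ) + 2 * s))) < ⊤ →
        (∫⁻ x : EuclideanSpace ℝ (Fin N), ENNReal.ofReal (V x * ‖u x‖ ^ 2)) < ⊤ →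
        (∫⁻ x : EuclideanSpace ℝ (Fin N), ENNReal.ofReal (‖u x‖ ^ 2))
          ≤ ENNReal.ofReal c *
              ((∫⁻ x : EuclideanSpace ℝ (Fin N), ∫⁻ y : EuclideanSpace ℝ (Fin N),
                  ENNReal.ofReal (‖u x - u y‖ ^ 2 / ‖x - y‖ ^ ((N : ℝ) + 2 * s)))
                + ∫⁻ x : EuclideanSpace ℝ (Fin N), ENNReal.ofReal (V x * ‖u x‖ ^ 2)) := by
  classical
  set μ : Measure (EuclideanSpace ℝ (Fin N)) := volume with hμdef
  have hfr : Module.finrank ℝ (EuclideanSpace ℝ (Fin N)) = N := finrank_euclideanSpace_fin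
  haveI : Nontrivial (EuclideanSpace ℝ (Fin N)) :=
    Module.nontrivial_of_finrank_pos (R := ℝ) (by rw [hfr]; exact hN)
  set A : Set (EuclideanSpace ℝ (Fin N)) := {x | V x < τ₀} with hAdef
  have hAmeas : MeasurableSet A := (isOpen_lt hVcont continuous_const).measurableSet
  set b : ℝ≥0∞ := μ (Metric.ball (0 : EuclideanSpace ℝ (Fin N)) 1) with hbdef
  have hb0 : 0 < b := Metric.measure_ball_pos μ _ one_pos
  have hbtop : b < ⊤ := measure_ball_lt_top
  -- choose the radius t
  set t : ℝ := max 1 ((μ A / b).toReal + 1) with htdef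
  have ht1 : (1 : ℝ) ≤ t := le_max_left _ _
  have ht0 : (0 : ℝ) < t := lt_of_lt_of_le one_pos ht1
  have hball : μ A < μ (Metric.ball (0 : EuclideanSpace ℝ (Fin N)) t) := by
    rw [Measure.addHaar_ball μ 0 ht0.le, hfr]
    have hdivtop : μ A / b ≠ ⊤ := (ENNReal.div_lt_top hVfin.ne hb0.ne').ne
    have h1 : μ A / b < ENNReal.ofReal t := by
      rw [ENNReal.lt_ofReal_iff_toReal_lt hdivtop]
      calc (μ A / b).toReal < (μ A / b).toReal + 1 := lt_add_one _
        _ ≤ t := le_max_right _ _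
    have h2 : ENNReal.ofReal t ≤ ENNReal.ofReal (t ^ N) :=
      ENNReal.ofReal_le_ofReal (le_self_pow₀ ht1 (by omega))
    calc μ A = (μ A / b) * b := (ENNReal.div_mul_cancel hb0.ne' hbtop.ne).symm
      _ < ENNReal.ofReal (t ^ N) * b :=
        by rw [mul_comm _ b, mul_comm _ b]; exact ENNReal.mul_lt_mul_right hb0.ne' hbtop.ne (lt_of_lt_of_le h1 h2)
  set m : ℝ≥0∞ := μ (Metric.ball (0 : EuclideanSpace ℝ (Fin N)) t) - μ A with hmdef
  have hm0 : 0 < m := tsub_pos_iff_lt.mpr hball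
  have hmtop : m < ⊤ := lt_of_le_of_lt tsub_le_self measure_ball_lt_top
  -- each ball of radius t meets the complement of A in measure ≥ m
  have hmD : ∀ x : EuclideanSpace ℝ (Fin N), m ≤ μ (Metric.ball x t \ A) := by
    intro x
    have hsub : Metric.ball x t ⊆ (Metric.ball x t \ A) ∪ A := by
      intro y hy
      by_cases h : y ∈ A
      · exact Or.inr h
      · exact Or.inl ⟨hy, h⟩
    have h1 : μ (Metric.ball x t) ≤ μ (Metric.ball x t \ A) + μ A :=
      le_trans (measure_mono hsub) (measure_union_le _ _)
    have h2 : μ (Metric.ball (0 : EuclideanSpace ℝ (Fin N)) t) = μ (Metric.ball x t) :=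
      (Measure.addHaar_ball_center μ x t).symm
    rw [hmdef, h2]
    exact tsub_le_iff_right.mpr h1
  set p : ℝ := (N : ℝ) + 2 * s with hpdef
  have hp0 : (0 : ℝ) < p := by positivity
  -- the constants
  set c₁ : ℝ≥0∞ := ENNReal.ofReal (2 * t ^ p) with hc₁def
  set c₂ : ℝ≥0∞ := ENNReal.ofReal (2 * τ₀⁻¹) with hc₂def
  set C₁ : ℝ≥0∞ := m⁻¹ * c₁ with hC₁def
  set C₂ : ℝ≥0∞ := m⁻¹ * c₂ * μ A + ENNReal.ofReal τ₀⁻¹ with hC₂def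
  have hC₁top : C₁ < ⊤ :=
    ENNReal.mul_lt_top (ENNReal.inv_lt_top.mpr hm0) ENNReal.ofReal_lt_top
  have hC₂top : C₂ < ⊤ := by
    refine ENNReal.add_lt_top.mpr ⟨?_, ENNReal.ofReal_lt_top⟩
    exact ENNReal.mul_lt_top
      (ENNReal.mul_lt_top (ENNReal.inv_lt_top.mpr hm0) ENNReal.ofReal_lt_top) hVfin
  refine ⟨(max C₁ C₂).toReal + 1, by positivity, ?_⟩
  have hmaxtop : max C₁ C₂ ≠ ⊤ := (max_lt hC₁top hC₂top).ne
  have hC₁le : C₁ ≤ ENNReal.ofReal ((max C₁ C₂).toReal + 1) := by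
    calc C₁ ≤ max C₁ C₂ := le_max_left _ _
      _ = ENNReal.ofReal ((max C₁ C₂).toReal) := (ENNReal.ofReal_toReal hmaxtop).symm
      _ ≤ _ := ENNReal.ofReal_le_ofReal (by linarith)
  have hC₂le : C₂ ≤ ENNReal.ofReal ((max C₁ C₂).toReal + 1) := by
    calc C₂ ≤ max C₁ C₂ := le_max_right _ _
      _ = ENNReal.ofReal ((max C₁ C₂).toReal) := (ENNReal.ofReal_toReal hmaxtop).symm
      _ ≤ _ := ENNReal.ofReal_le_ofReal (by linarith)
  intro u hu hG hW
  have huae : AEMeasurable u μ := hu.aestronglyMeasurable.aemeasurable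
  set f : EuclideanSpace ℝ (Fin N) → ℝ≥0∞ :=
    fun x => ENNReal.ofReal (‖u x‖ ^ 2) with hfdef
  set g : EuclideanSpace ℝ (Fin N) → ℝ≥0∞ :=
    fun x => ENNReal.ofReal (V x * ‖u x‖ ^ 2) with hgdef
  set K : EuclideanSpace ℝ (Fin N) → EuclideanSpace ℝ (Fin N) → ℝ≥0∞ :=
    fun x y => ENNReal.ofReal (‖u x - u y‖ ^ 2 / ‖x - y‖ ^ p) with hKdef
  set G : ℝ≥0∞ := ∫⁻ x, ∫⁻ y, K x y ∂μ ∂μ with hGdef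
  set W : ℝ≥0∞ := ∫⁻ x, g x ∂μ with hWdef
  -- bound on the complement of A
  have hcompl : ∫⁻ x in Aᶜ, f x ∂μ ≤ ENNReal.ofReal τ₀⁻¹ * W := by
    have hmono : ∫⁻ x in Aᶜ, f x ∂μ ≤ ∫⁻ x in Aᶜ, ENNReal.ofReal τ₀⁻¹ * g x ∂μ := by
      refine setLIntegral_mono' hAmeas.compl ?_
      intro x hx
      have hVx : τ₀ ≤ V x := not_lt.mp hx
      have hreal : ‖u x‖ ^ 2 ≤ τ₀⁻¹ * (V x * ‖u x‖ ^ 2) := by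
        have h1 : 1 ≤ τ₀⁻¹ * V x := by
          calc (1 : ℝ) = τ₀ / τ₀ := (div_self hτ₀.ne').symm
            _ ≤ V x / τ₀ := by gcongr
            _ = τ₀⁻¹ * V x := by ring
        nlinarith [sq_nonneg (‖u x‖)]
      calc f x ≤ ENNReal.ofReal (τ₀⁻¹ * (V x * ‖u x‖ ^ 2)) :=
            ENNReal.ofReal_le_ofReal hreal
        _ = ENNReal.ofReal τ₀⁻¹ * g x := ENNReal.ofReal_mul (inv_nonneg.mpr hτ₀.le)
    calc ∫⁻ x in Aᶜ, f x ∂μ ≤ ∫⁻ x in Aᶜ, ENNReal.ofReal τ₀⁻¹ * g x ∂μ := hmono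
      _ = ENNReal.ofReal τ₀⁻¹ * ∫⁻ x in Aᶜ, g x ∂μ :=
          lintegral_const_mul' _ _ ENNReal.ofReal_ne_top
      _ ≤ ENNReal.ofReal τ₀⁻¹ * W :=
          mul_le_mul_right (setLIntegral_le_lintegral _ _) _
  -- key pointwise estimate valid for every x
  have hkey : ∀ x : EuclideanSpace ℝ (Fin N),
      f x * m ≤ c₂ * W + c₁ * ∫⁻ y, K x y ∂μ := by
    intro x
    set D : Set (EuclideanSpace ℝ (Fin N)) := Metric.ball x t \ A with hDdef
    have hDmeas : MeasurableSet D := measurableSet_ball.diff hAmeas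
    have hKae : AEMeasurable (fun y => c₂ * g y) (μ.restrict D) := by
      have h1 : AEMeasurable (fun y => u y) μ := huae
      have h2 : AEMeasurable (fun y => ‖u y‖ ^ 2) μ :=
        ((continuous_norm.pow 2).measurable).comp_aemeasurable h1
      have h3 : AEMeasurable g μ :=
        ((hVcont.measurable.aemeasurable.mul h2).ennreal_ofReal)
      exact (h3.const_mul c₂).restrict
    have hpt : ∀ y ∈ D, f x ≤ c₂ * g y + c₁ * K x y := by
      intro y hy
      obtain ⟨hyball, hyA⟩ := hy
      have hVy : τ₀ ≤ V y := not_lt.mp hyA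
      have hdist : ‖x - y‖ ≤ t := by
        have := hyball
        rw [Metric.mem_ball, dist_comm] at this
        calc ‖x - y‖ = dist x y := (dist_eq_norm x y).symm
          _ ≤ t := this.le
      -- real pointwise inequality
      have h1 : ‖u x‖ ^ 2
          ≤ 2 * ‖u x - u y‖ ^ 2 + 2 * ‖u y‖ ^ 2 := by
        have htri : ‖u x‖ ≤ ‖u x - u y‖ + ‖u y‖ := by
          calc ‖u x‖ = ‖(u x - u y) + u y‖ := by ring_nf
            _ ≤ _ := norm_add_le _ _
        nlinarith [sq_nonneg (‖u x - u y‖ - ‖u y‖),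
          norm_nonneg (u x - u y), norm_nonneg (u y),
          norm_nonneg (u x)]
      have h2 : ‖u x - u y‖ ^ 2
          ≤ t ^ p * (‖u x - u y‖ ^ 2 / ‖x - y‖ ^ p) := by
        by_cases hxy : x = y
        · subst hxy
          simp
        · have hnorm : (0 : ℝ) < ‖x - y‖ := by
            rw [norm_pos_iff]
            exact sub_ne_zero.mpr hxy
          have hpow : ‖x - y‖ ^ p ≤ t ^ p :=
            Real.rpow_le_rpow hnorm.le hdist hp0.le
          have hpowpos : (0 : ℝ) < ‖x - y‖ ^ p := Real.rpow_pos_of_pos hnorm p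
          calc ‖u x - u y‖ ^ 2
              = ‖x - y‖ ^ p * (‖u x - u y‖ ^ 2 / ‖x - y‖ ^ p) := by
                field_simp
            _ ≤ t ^ p * (‖u x - u y‖ ^ 2 / ‖x - y‖ ^ p) := by
                have : (0:ℝ) ≤ ‖u x - u y‖ ^ 2 / ‖x - y‖ ^ p := by positivity
                exact mul_le_mul_of_nonneg_right hpow this
      have h3 : ‖u y‖ ^ 2 ≤ τ₀⁻¹ * (V y * ‖u y‖ ^ 2) := by
        have h1' : 1 ≤ τ₀⁻¹ * V y := by
          calc (1 : ℝ) = τ₀ / τ₀ := (div_self hτ₀.ne').symm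
            _ ≤ V y / τ₀ := by gcongr
            _ = τ₀⁻¹ * V y := by ring
        nlinarith [sq_nonneg (‖u y‖)]
      have hreal : ‖u x‖ ^ 2
          ≤ 2 * τ₀⁻¹ * (V y * ‖u y‖ ^ 2)
            + 2 * t ^ p * (‖u x - u y‖ ^ 2 / ‖x - y‖ ^ p) := by
        nlinarith
      have hker_nonneg : (0 : ℝ) ≤ ‖u x - u y‖ ^ 2 / ‖x - y‖ ^ p := by
        apply div_nonneg (sq_nonneg _) (Real.rpow_nonneg (norm_nonneg _) _)
      calc f x ≤ ENNReal.ofReal (2 * τ₀⁻¹ * (V y * ‖u y‖ ^ 2)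
            + 2 * t ^ p * (‖u x - u y‖ ^ 2 / ‖x - y‖ ^ p)) :=
            ENNReal.ofReal_le_ofReal hreal
        _ = ENNReal.ofReal (2 * τ₀⁻¹ * (V y * ‖u y‖ ^ 2))
            + ENNReal.ofReal (2 * t ^ p * (‖u x - u y‖ ^ 2 / ‖x - y‖ ^ p)) :=
            ENNReal.ofReal_add
              (mul_nonneg (mul_nonneg two_pos.le (inv_nonneg.mpr hτ₀.le))
                (mul_nonneg (hVnonneg y) (sq_nonneg _)))
              (by positivity)
        _ = c₂ * g y + c₁ * K x y := by
            rw [hc₂def, hc₁def, hgdef, hKdef,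
              ← ENNReal.ofReal_mul (mul_nonneg two_pos.le (inv_nonneg.mpr hτ₀.le)),
              ← ENNReal.ofReal_mul (by positivity)]
    calc f x * m ≤ f x * μ D := mul_le_mul_right (hmD x) _
      _ = ∫⁻ _ in D, f x ∂μ := (setLIntegral_const D (f x)).symm
      _ ≤ ∫⁻ y in D, (c₂ * g y + c₁ * K x y) ∂μ := setLIntegral_mono' hDmeas hpt
      _ = (∫⁻ y in D, c₂ * g y ∂μ) + ∫⁻ y in D, c₁ * K x y ∂μ :=
          lintegral_add_left' hKae _
      _ ≤ (∫⁻ y, c₂ * g y ∂μ) + ∫⁻ y, c₁ * K x y ∂μ :=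
          add_le_add (setLIntegral_le_lintegral _ _) (setLIntegral_le_lintegral _ _)
      _ = c₂ * W + c₁ * ∫⁻ y, K x y ∂μ := by
          rw [lintegral_const_mul' _ _ ENNReal.ofReal_ne_top,
            lintegral_const_mul' _ _ ENNReal.ofReal_ne_top]
  -- integrate the key estimate over A
  have hA : ∫⁻ x in A, f x ∂μ ≤ m⁻¹ * (c₂ * W * μ A + c₁ * G) := by
    have hstep : ∀ x, f x ≤ m⁻¹ * (c₂ * W + c₁ * ∫⁻ y, K x y ∂μ) := by
      intro x
      have := hkey x
      rw [← ENNReal.div_eq_inv_mul]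
      exact (ENNReal.le_div_iff_mul_le (Or.inl hm0.ne') (Or.inl hmtop.ne)).mpr this
    calc ∫⁻ x in A, f x ∂μ
        ≤ ∫⁻ x in A, m⁻¹ * (c₂ * W + c₁ * ∫⁻ y, K x y ∂μ) ∂μ := lintegral_mono hstep
      _ = m⁻¹ * ∫⁻ x in A, (c₂ * W + c₁ * ∫⁻ y, K x y ∂μ) ∂μ :=
          lintegral_const_mul' _ _ (ENNReal.inv_ne_top.mpr hm0.ne')
      _ = m⁻¹ * ((∫⁻ _ in A, c₂ * W ∂μ) + ∫⁻ x in A, c₁ * ∫⁻ y, K x y ∂μ ∂μ) := by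
          rw [lintegral_add_left' aemeasurable_const]
      _ = m⁻¹ * (c₂ * W * μ A + c₁ * ∫⁻ x in A, ∫⁻ y, K x y ∂μ ∂μ) := by
          rw [setLIntegral_const, lintegral_const_mul' _ _ ENNReal.ofReal_ne_top]
      _ ≤ m⁻¹ * (c₂ * W * μ A + c₁ * G) := by
          gcongr
          exact setLIntegral_le_lintegral _ _
  -- combine
  calc ∫⁻ x, f x ∂μ
      = (∫⁻ x in A, f x ∂μ) + ∫⁻ x in Aᶜ, f x ∂μ := (lintegral_add_compl f hAmeas).symm
    _ ≤ m⁻¹ * (c₂ * W * μ A + c₁ * G) + ENNReal.ofReal τ₀⁻¹ * W := add_le_add hA hcompl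
    _ = C₁ * G + C₂ * W := by
        rw [hC₁def, hC₂def]
        ring
    _ ≤ ENNReal.ofReal ((max C₁ C₂).toReal + 1) * G
        + ENNReal.ofReal ((max C₁ C₂).toReal + 1) * W := by
        gcongr
    _ = ENNReal.ofReal ((max C₁ C₂).toReal + 1) * (G + W) := (mul_add _ _ _).symm
end
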